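/- Let n be even, let a_1, …, a_n be positive integers, and let W = Σ_i a_i. Define an instance of Seat Arrangement with agents P = {p_1, …, p_n} ∪ {c_1, c_2}, preferences f_{p_i}(c_1) = f_{p_i}(c_2) = W/2 and f_{c_j}(p_i) = a_i for all i and j ∈ {1,2}, and all other preferences 0; the seat graph is the disjoint union of two stars, each consisting of a center adjacent to n/2 leaves. Then there is an arrangement π with min_{p ∈ P} U_p(π) ≥ W/2 if and only if {1, …, n} can be partitioned into sets I_1, I_2 with |I_1| = |I_2| = n/2 and Σ_{i ∈ I_1} a_i = Σ_{i ∈ I_2} a_i = W/2. -/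

import Mathlib

open scoped Classical

noncomputable section

namespace SeatArrangement

variable {P V : Type*}

/-- The utility of agent `p` under arrangement `π`:
the sum, over the seat-graph neighbors `v` of `π p`, of `p`'s preference for the agent seated
at `v`. -/
def utility [Fintype V] (G : SimpleGraph V) (f : P → P → ℝ) (π : P ≃ V) (p : P) : ℝ :=
  ∑ v : V, if G.Adj (π p) v then f p (π.symm v) else 0

/-- The social welfare of an arrangement: the sum of the utilities of all agents. -/
def sw [Fintype P] [Fintype V] (G : SimpleGraph V) (f : P → P → ℝ) (π : P ≃ V) : ℝ :=
  ∑ p : P, utility G f π p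

/-- The `(p,q)`-swap arrangement of `π`. -/
def swapArr (π : P ≃ V) (p q : P) : P ≃ V := (Equiv.swap p q).trans π

/-- `{p, q}` is a blocking pair for `π`: both agents strictly improve by swapping seats. -/
def blocking [Fintype V] (G : SimpleGraph V) (f : P → P → ℝ) (π : P ≃ V) (p q : P) : Prop :=
  p ≠ q ∧ utility G f π p < utility G f (swapArr π p q) p
        ∧ utility G f π q < utility G f (swapArr π p q) q

/-- An arrangement is stable if it has no blocking pair. -/
def stable [Fintype V] (G : SimpleGraph V) (f : P → P → ℝ) (π : P ≃ V) : Prop :=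
  ∀ p q : P, ¬ blocking G f π p q

/-- An arrangement is envy-free if no agent would strictly improve by taking
another agent's seat (via a swap). -/
def envyFree [Fintype V] (G : SimpleGraph V) (f : P → P → ℝ) (π : P ≃ V) : Prop :=
  ∀ p q : P, p ≠ q → utility G f (swapArr π p q) p ≤ utility G f π p

/-- The least utility of an agent under `π` (for a finite nonempty set of agents, the
infimum of the range of utilities is the minimum utility). -/
def minUtil [Fintype V] (G : SimpleGraph V) (f : P → P → ℝ) (π : P ≃ V) : ℝ :=
  sInf (Set.range (utility G f π))

/-- A maximin arrangement maximizes the least utility of an agent. -/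
def maximin [Fintype V] (G : SimpleGraph V) (f : P → P → ℝ) (πf : P ≃ V) : Prop :=
  ∀ π : P ≃ V, minUtil G f π ≤ minUtil G f πf

/-- A maximum arrangement maximizes the social welfare. -/
def maximum [Fintype P] [Fintype V] (G : SimpleGraph V) (f : P → P → ℝ) (πm : P ≃ V) : Prop :=
  ∀ π : P ≃ V, sw G f π ≤ sw G f πm

end SeatArrangement

open SeatArrangement

/-- Seats for STATEMENTS 17/18: two star centers (`Fin 2`) and, for each center
`j : Fin 2`, `n/2` leaves `(j, ·)`. -/
abbrev StarSeats (n : ℕ) := Fin 2 ⊕ (Fin 2 × Fin (n / 2))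

/-- The seat graph for STATEMENTS 17/18: the disjoint union of two stars, each consisting
of a center adjacent to `n/2` leaves. -/
def twoStars (n : ℕ) : SimpleGraph (StarSeats n) where
  Adj x y :=
    match x, y with
    | .inl j, .inr l => j = l.1
    | .inr l, .inl j => j = l.1
    | _, _ => False
  symm := by
    constructor
    rintro (x | x) (y | y) h <;> simp_all
  loopless := by
    constructor
    rintro (x | x) h <;> simp_all

/-- Preferences for STATEMENT 17: each element agent `p_i` has preference `W/2` for each of
the two center agents `c_1, c_2`, each center agent has preference `a_i` for `p_i`, and all
other preferences are 0. -/
def prefs17 (n W : ℕ) (a : Fin n → ℕ) : (Fin n ⊕ Fin 2) → (Fin n ⊕ Fin 2) → ℝ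
  | .inl _, .inr _ => (W : ℝ) / 2
  | .inr _, .inl i => a i
  | _, _ => 0

lemma twoStars_adj_inl_inr (n : ℕ) (j : Fin 2) (l : Fin 2 × Fin (n/2)) :
    (twoStars n).Adj (.inl j) (.inr l) ↔ j = l.1 := Iff.rfl
lemma twoStars_adj_inl_inl (n : ℕ) (j j' : Fin 2) :
    ¬ (twoStars n).Adj (.inl j) (.inl j') := fun h => h
lemma twoStars_adj_inr_inl (n : ℕ) (l : Fin 2 × Fin (n/2)) (j : Fin 2) :
    (twoStars n).Adj (.inr l) (.inl j) ↔ j = l.1 := Iff.rfl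
lemma twoStars_adj_inr_inr (n : ℕ) (l l' : Fin 2 × Fin (n/2)) :
    ¬ (twoStars n).Adj (.inr l) (.inr l') := fun h => h

lemma utility_center {n : ℕ} (f : (Fin n ⊕ Fin 2) → (Fin n ⊕ Fin 2) → ℝ)
    (π : (Fin n ⊕ Fin 2) ≃ StarSeats n) (p : Fin n ⊕ Fin 2) (j : Fin 2)
    (h : π p = Sum.inl j) :
    utility (twoStars n) f π p = ∑ k : Fin (n/2), f p (π.symm (Sum.inr (j, k))) := by
  rw [utility, h, Fintype.sum_sum_type]
  rw [Finset.sum_eq_zero (fun j' _ => by simp [twoStars_adj_inl_inl]), zero_add]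
  simp only [twoStars_adj_inl_inr]
  rw [Fintype.sum_prod_type]
  rw [Finset.sum_eq_single j]
  · simp
  · intro b _ hb
    apply Finset.sum_eq_zero
    intro k _
    simp [Ne.symm hb]
  · simp

lemma utility_leaf {n : ℕ} (f : (Fin n ⊕ Fin 2) → (Fin n ⊕ Fin 2) → ℝ)
    (π : (Fin n ⊕ Fin 2) ≃ StarSeats n) (p : Fin n ⊕ Fin 2) (j : Fin 2) (k : Fin (n/2))
    (h : π p = Sum.inr (j, k)) :
    utility (twoStars n) f π p = f p (π.symm (Sum.inl j)) := by
  rw [utility, h, Fintype.sum_sum_type,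
    Finset.sum_eq_zero (fun l (_ : l ∈ Finset.univ (α := Fin 2 × Fin (n/2))) =>
      by simp [twoStars_adj_inr_inr]), add_zero]
  simp only [twoStars_adj_inr_inl]
  rw [Finset.sum_ite_eq' Finset.univ j]
  simp

def twoProd (X : Type*) : X ⊕ X ≃ Fin 2 × X where
  toFun := Sum.elim (fun x => (0, x)) (fun x => (1, x))
  invFun := fun p => if p.1 = 0 then .inl p.2 else .inr p.2
  left_inv := by rintro (x | x) <;> simp
  right_inv := by rintro ⟨j, x⟩; fin_cases j <;> simp

section main
variable {n : ℕ} (a : Fin n → ℕ)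

/-- the star of a seat -/
def stS {n : ℕ} : StarSeats n → Fin 2 := Sum.elim id Prod.fst

lemma sum_star_eq (π : (Fin n ⊕ Fin 2) ≃ StarSeats n) (c : Fin 2) (j : Fin 2) :
    ∑ i ∈ Finset.univ.filter (fun i => stS (π (.inl i)) = j), (a i : ℝ)
      = prefs17 n (∑ i, a i) a (.inr c) (π.symm (.inl j))
        + ∑ k : Fin (n/2), prefs17 n (∑ i, a i) a (.inr c) (π.symm (.inr (j, k))) := by
  set f := prefs17 n (∑ i, a i) a with hf
  have key := Equiv.sum_comp π (fun v => if stS v = j then f (.inr c) (π.symm v) else 0)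
  simp only [Equiv.symm_apply_apply] at key
  have lhs : ∑ p : Fin n ⊕ Fin 2, (if stS (π p) = j then f (.inr c) p else 0)
      = ∑ i ∈ Finset.univ.filter (fun i => stS (π (.inl i)) = j), (a i : ℝ) := by
    rw [Fintype.sum_sum_type]
    have h2 : ∀ c' : Fin 2, (if stS (π (.inr c')) = j then f (.inr c) (.inr c') else 0) = 0 := by
      intro c'; have : f (.inr c) (.inr c') = 0 := rfl
      rw [this, ite_self]
    rw [Finset.sum_eq_zero (fun c' _ => h2 c'), add_zero, Finset.sum_filter]
    rfl
  have rhs : ∑ v : StarSeats n, (if stS v = j then f (.inr c) (π.symm v) else 0)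
      = f (.inr c) (π.symm (.inl j))
        + ∑ k : Fin (n/2), f (.inr c) (π.symm (.inr (j, k))) := by
    rw [Fintype.sum_sum_type]
    congr 1
    · show (∑ j' : Fin 2, if j' = j then f (.inr c) (π.symm (.inl j')) else 0) = _
      rw [Finset.sum_ite_eq' Finset.univ j]; simp
    · show (∑ l : Fin 2 × Fin (n/2), if l.1 = j then f (.inr c) (π.symm (.inr l)) else 0) = _
      rw [Fintype.sum_prod_type, Finset.sum_eq_single j]
      · simp
      · intro b _ hb
        exact Finset.sum_eq_zero (fun k _ => by simp [hb])
      · simp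
  rw [← lhs, key, rhs]

end main

/-- for even `n` and positive integers `a_1, …, a_n` with sum `W`, the above
instance has an arrangement in which every agent has utility at least `W/2` if and only if
the index set can be split into two halves of size `n/2` each summing to `W/2`. -/
theorem maximin_iff_partition (n : ℕ) (hn : Even n)
    (a : Fin n → ℕ) (hpos : ∀ i, 0 < a i) :
    (∃ π : (Fin n ⊕ Fin 2) ≃ StarSeats n, ∀ p : Fin n ⊕ Fin 2,
      ((∑ i, a i : ℕ) : ℝ) / 2 ≤ utility (twoStars n) (prefs17 n (∑ i, a i) a) π p) ↔
    (∃ I : Finset (Fin n), 2 * I.card = n ∧ 2 * ∑ i ∈ I, a i = ∑ i, a i) := by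
  set W := ∑ i, a i with hW
  set f := prefs17 n W a with hf
  constructor
  · rintro ⟨π, hπ⟩
    have hfc : ∀ (c : Fin 2) (q : Fin n ⊕ Fin 2), 0 ≤ f (.inr c) q := by
      rintro c (i | c')
      · show (0:ℝ) ≤ (a i : ℝ); positivity
      · exact le_refl _
    have hsub : ∀ x : Fin 2, 1 - x ≠ x := by decide
    -- Claim B : the two centers sit in distinct stars
    have hne : stS (π (.inr 0)) ≠ stS (π (.inr 1)) := by
      intro hq
      have hall : ∀ c : Fin 2, stS (π (.inr c)) = stS (π (.inr (0:Fin 2))) := by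
        intro c; fin_cases c
        · rfl
        · exact hq.symm
      set j := stS (π (.inr (0 : Fin 2))) with hj
      rcases hp : π.symm (.inl (1 - j)) with i | c
      · -- an element at the centre of star (1-j)
        have hpi : π (.inl i) = .inl (1 - j) := by
          rw [← hp, Equiv.apply_symm_apply]
        have hzero : utility (twoStars n) f π (.inl i) = 0 := by
          rw [utility_center f π _ _ hpi]
          apply Finset.sum_eq_zero
          intro k _
          rcases hq2 : π.symm (.inr (1 - j, k)) with i' | c
          · rfl
          · exfalso
            have h1 : π (.inr c) = .inr (1 - j, k) := by rw [← hq2, Equiv.apply_symm_apply]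
            have h2 : stS (π (.inr c)) = 1 - j := by rw [h1]; rfl
            exact hsub j (by rw [← h2, hall c])
        have hWpos : 0 < W := Finset.sum_pos (fun i _ => hpos i) ⟨i, Finset.mem_univ i⟩
        have h3 : (0:ℝ) < (W:ℝ) := by exact_mod_cast hWpos
        linarith [hπ (.inl i), le_of_eq hzero.symm]
      · have h1 : π (.inr c) = .inl (1 - j) := by rw [← hp, Equiv.apply_symm_apply]
        have h2 : stS (π (.inr c)) = 1 - j := by rw [h1]; rfl
        exact hsub j (by rw [← h2, hall c])
    set j0 := stS (π (.inr (0:Fin 2))) with hj0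
    set j1 := stS (π (.inr (1:Fin 2))) with hj1
    set I : Finset (Fin n) := Finset.univ.filter (fun i => stS (π (.inl i)) = j0) with hI
    refine ⟨I, ?_, ?_⟩
    · -- cardinality
      have hbij : (Finset.univ.filter (fun p : Fin n ⊕ Fin 2 => stS (π p) = j0)).card
          = (Finset.univ.filter (fun v : StarSeats n => stS v = j0)).card := by
        apply Finset.card_bij (fun p _ => π p)
        · intro p hp
          simp only [Finset.mem_filter, Finset.mem_univ, true_and] at hp ⊢
          exact hp
        · intro p _ q _ h
          exact π.injective h
        · intro v hv
          refine ⟨π.symm v, ?_, by simp⟩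
          simp only [Finset.mem_filter, Finset.mem_univ, true_and,
            Equiv.apply_symm_apply] at hv ⊢
          exact hv
      have hseats : (Finset.univ.filter (fun v : StarSeats n => stS v = j0)).card
          = n / 2 + 1 := by
        rw [Finset.card_filter, Fintype.sum_sum_type]
        have h1 : (∑ j : Fin 2, if stS (Sum.inl (α := Fin 2) (β := Fin 2 × Fin (n/2)) j) = j0
            then 1 else 0) = 1 := by
          show (∑ j : Fin 2, if j = j0 then 1 else 0) = 1
          rw [Finset.sum_ite_eq' Finset.univ j0]; simp
        have h2 : (∑ l : Fin 2 × Fin (n/2),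
            if stS (Sum.inr (α := Fin 2) l) = j0 then 1 else 0) = n / 2 := by
          show (∑ l : Fin 2 × Fin (n/2), if l.1 = j0 then 1 else 0) = n / 2
          rw [Fintype.sum_prod_type, Finset.sum_eq_single j0]
          · simp
          · intro b _ hb
            exact Finset.sum_eq_zero (fun k _ => by simp [hb])
          · simp
        rw [h1, h2]; omega
      have hagents : (Finset.univ.filter (fun p : Fin n ⊕ Fin 2 => stS (π p) = j0)).card
          = I.card + 1 := by
        rw [Finset.card_filter, Fintype.sum_sum_type, hI, Finset.card_filter]
        congr 1
        rw [Fin.sum_univ_two]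
        rw [if_pos rfl, if_neg (Ne.symm hne)]
      have hcard : I.card = n / 2 := by omega
      obtain ⟨m, hm⟩ := hn
      omega
    · -- sums
      have hbound : ∀ (c : Fin 2),
          (W:ℝ)/2 ≤ ∑ i ∈ Finset.univ.filter
            (fun i => stS (π (.inl i)) = stS (π (.inr c))), (a i : ℝ) := by
        intro c
        rw [sum_star_eq a π c (stS (π (.inr c)))]
        rcases hc : π (.inr c) with j'' | l
        · simp only [stS, Sum.elim_inl]
          show (W:ℝ)/2 ≤ f (.inr c) (π.symm (.inl j''))
            + ∑ k : Fin (n/2), f (.inr c) (π.symm (.inr (j'', k)))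
          have h1 : π.symm (.inl j'') = .inr c := by rw [← hc, Equiv.symm_apply_apply]
          rw [h1, show f (.inr c) (.inr c) = 0 from rfl, zero_add]
          have := hπ (.inr c)
          rw [utility_center f π _ j'' hc] at this
          exact this
        · simp only [stS, Sum.elim_inr]
          show (W:ℝ)/2 ≤ f (.inr c) (π.symm (.inl l.1))
            + ∑ k : Fin (n/2), f (.inr c) (π.symm (.inr (l.1, k)))
          have := hπ (.inr c)
          rw [utility_leaf f π _ l.1 l.2 (by rw [hc])] at this
          have h3 : (0:ℝ) ≤ ∑ k : Fin (n/2), f (.inr c) (π.symm (.inr (l.1, k))) :=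
            Finset.sum_nonneg (fun k _ => hfc c _)
          linarith
      have hIc : Finset.univ.filter (fun i => ¬ stS (π (.inl i)) = j0)
          = Finset.univ.filter (fun i => stS (π (.inl i)) = j1) := by
        ext i
        simp only [Finset.mem_filter, Finset.mem_univ, true_and]
        have : ∀ x y z : Fin 2, y ≠ z → (¬ x = y ↔ x = z) := by decide
        exact this _ _ _ hne
      have hsplit := Finset.sum_filter_add_sum_filter_not Finset.univ
        (fun i => stS (π (.inl i)) = j0) (fun i => (a i : ℝ))
      have hWr : (∑ i : Fin n, (a i : ℝ)) = (W : ℝ) := by rw [hW]; push_cast; rfl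
      have b0 := hbound 0
      have b1 := hbound 1
      rw [← hj0] at b0
      rw [← hj1] at b1
      rw [← hIc] at b1
      have hIval : (∑ i ∈ I, (a i : ℝ)) = (W:ℝ)/2 := by
        rw [hI] at *
        linarith [hsplit, hWr, b0, b1]
      have : ((2 * ∑ i ∈ I, a i : ℕ) : ℝ) = (W : ℝ) := by
        push_cast
        linarith
      exact_mod_cast this

  · rintro ⟨I, hIcard, hIsum⟩
    obtain ⟨m, hm⟩ := hn
    have hcard1 : Fintype.card {x : Fin n // x ∈ I} = n / 2 := by
      simp only [Fintype.card_coe]; omega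
    have hcard2 : Fintype.card {x : Fin n // ¬ x ∈ I} = n / 2 := by
      rw [Fintype.card_subtype_compl]
      simp only [Fintype.card_coe, Fintype.card_fin]; omega
    set e0 : {x : Fin n // x ∈ I} ≃ Fin (n/2) := Fintype.equivFinOfCardEq hcard1 with he0
    set e1 : {x : Fin n // ¬ x ∈ I} ≃ Fin (n/2) := Fintype.equivFinOfCardEq hcard2 with he1
    set e : Fin n ≃ Fin 2 × Fin (n/2) :=
      (Equiv.sumCompl (· ∈ I)).symm.trans ((e0.sumCongr e1).trans (twoProd (Fin (n/2)))) with he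
    set π : (Fin n ⊕ Fin 2) ≃ StarSeats n :=
      (Equiv.sumComm (Fin n) (Fin 2)).trans (Equiv.sumCongr (Equiv.refl (Fin 2)) e) with hπd
    have hπl : ∀ i : Fin n, π (.inl i) = .inr (e i) := fun i => rfl
    have hπr : ∀ c : Fin 2, π (.inr c) = .inl c := fun c => rfl
    have hπsl : ∀ j : Fin 2, π.symm (.inl j) = .inr j := by
      intro j; rw [Equiv.symm_apply_eq, hπr]
    have hπsr : ∀ x : Fin 2 × Fin (n/2), π.symm (.inr x) = .inl (e.symm x) := by
      intro x; rw [Equiv.symm_apply_eq, hπl, Equiv.apply_symm_apply]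
    have hsymm0 : ∀ k : Fin (n/2), e.symm ((0 : Fin 2), k) = (e0.symm k : Fin n) := by
      intro k
      rw [he]
      simp [twoProd, Equiv.sumCongr_symm, Equiv.sumCongr_apply]
    have hsymm1 : ∀ k : Fin (n/2), e.symm ((1 : Fin 2), k) = (e1.symm k : Fin n) := by
      intro k
      rw [he]
      simp [twoProd, Equiv.sumCongr_symm, Equiv.sumCongr_apply]
    have hIr : (∑ i ∈ I, (a i : ℝ)) = (W : ℝ) / 2 := by
      have h6 : (2:ℝ) * ∑ i ∈ I, (a i : ℝ) = (W:ℝ) := by exact_mod_cast hIsum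
      linarith
    have hWr : (∑ i : Fin n, (a i : ℝ)) = (W : ℝ) := by rw [hW]; push_cast; rfl
    refine ⟨π, ?_⟩
    rintro (i | c)
    · rw [utility_leaf f π _ (e i).1 (e i).2 (by rw [hπl])]
      rw [hπsl]
      exact le_of_eq rfl
    · rw [utility_center f π _ c (hπr c)]
      have hterm : ∀ k : Fin (n/2),
          f (.inr c) (π.symm (.inr (c, k))) = (a (e.symm (c, k)) : ℝ) := by
        intro k; rw [hπsr]; rfl
      simp only [hterm]
      have hc2 : ∀ c : Fin 2, c = 0 ∨ c = 1 := by decide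
      rcases hc2 c with rfl | rfl
      · have h7 : (∑ k : Fin (n/2), (a (e.symm ((0:Fin 2), k)) : ℝ))
            = ∑ x : {x : Fin n // x ∈ I}, (a x : ℝ) := by
          rw [← Equiv.sum_comp e0.symm (fun x : {x : Fin n // x ∈ I} => (a x : ℝ))]
          exact Finset.sum_congr rfl (fun k _ => by rw [hsymm0])
        rw [h7, Finset.sum_coe_sort I (fun i => (a i : ℝ)), hIr]
      · have h7 : (∑ k : Fin (n/2), (a (e.symm ((1:Fin 2), k)) : ℝ))
            = ∑ x : {x : Fin n // ¬ x ∈ I}, (a x : ℝ) := by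
          rw [← Equiv.sum_comp e1.symm (fun x : {x : Fin n // ¬ x ∈ I} => (a x : ℝ))]
          exact Finset.sum_congr rfl (fun k _ => by rw [hsymm1])
        rw [h7]
        have h5 : ∑ i ∈ Finset.univ.filter (fun i => ¬ i ∈ I), (a i : ℝ)
            = ∑ x : {x : Fin n // ¬ x ∈ I}, (a x : ℝ) :=
          Finset.sum_subtype _ (by intro x; simp) (fun i => (a i : ℝ))
        have hsplit := Finset.sum_filter_add_sum_filter_not Finset.univ
          (fun i => i ∈ I) (fun i => (a i : ℝ))
        have h8 : ∑ i ∈ Finset.univ.filter (fun i => i ∈ I), (a i : ℝ)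
            = ∑ i ∈ I, (a i : ℝ) := by
          rw [Finset.filter_univ_mem]
        rw [← h5]
        linarith
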